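/- arXiv:2204.04366 — 2 statements merged into one kernel-verified Lean document; each statement's English description precedes it below -/
import Mathlib

section
/- Fix an integer m ≥ 1 and let (ℓ, k) be a pair of integers with ℓ even, 0 ≤ ℓ, k ≤ 2^m − 1 and k ≤ ℓ. Then: (a) the set { r : 0 ≤ r ≤ m−1 and C(ℓ, 2^r) ≡ 0 (mod 2) } is nonempty; (b) writing j for its maximum, the set { r : j ≤ r ≤ m−1 and C(k, 2^r) ≡ 0 (mod 2) } is nonempty; (c) writing i for the minimum of the latter set, one has 2^m − 2^{i+1} ≤ ℓ and k + 2^i ≤ 2^m − 1. In particular the map φ(ℓ,k) = (ℓ − (2^m − 2^{i+1}), k + 2^i) is well defined on pairs with k ≤ ℓ. -/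
/-- Parity of binomial coefficients at powers of two: `C(n, 2^r)` is even iff bit `r` of `n`
is `0`. -/
lemma even_choose_two_pow_iff (r n : ℕ) :
    Even (Nat.choose n (2 ^ r)) ↔ n.testBit r = false := by
  induction r generalizing n with
  | zero =>
    simp only [pow_zero, Nat.choose_one_right, Nat.testBit_zero, Nat.even_iff,
      decide_eq_false_iff_not]
    omega
  | succ r ih =>
    haveI : Fact (Nat.Prime 2) := ⟨Nat.prime_two⟩
    have h := Choose.choose_modEq_choose_mod_mul_choose_div_nat (p := 2) (n := n)
      (k := 2 ^ (r + 1))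
    have h1 : 2 ^ (r + 1) % 2 = 0 := by
      simp [pow_succ, Nat.mul_mod_left]
    have h2 : 2 ^ (r + 1) / 2 = 2 ^ r := by
      rw [pow_succ, Nat.mul_div_cancel] ; norm_num
    rw [h1, h2, Nat.choose_zero_right, one_mul] at h
    have : Nat.choose n (2 ^ (r + 1)) % 2 = Nat.choose (n / 2) (2 ^ r) % 2 := h
    rw [Nat.even_iff, this, ← Nat.even_iff, ih, Nat.testBit_add_one]

lemma testBit_div_pow (n j r : ℕ) : (n / 2 ^ j).testBit r = n.testBit (j + r) := by
  simp [Nat.testBit_eq_decide_div_mod_eq, Nat.div_div_eq_div_mul, ← pow_add]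

/-- If all the bits of `n` in positions `j, …, j+t-1` are `1` and `n < 2^(j+t)` then
`n / 2^j = 2^t - 1`. -/
lemma div_eq_ones {n j t : ℕ} (hn : n < 2 ^ (j + t))
    (h : ∀ r, r < t → n.testBit (j + r) = true) : n / 2 ^ j = 2 ^ t - 1 := by
  apply Nat.eq_of_testBit_eq
  intro r
  rw [testBit_div_pow, Nat.testBit_two_pow_sub_one]
  by_cases hr : r < t
  · simp [h r hr, hr]
  · have : n < 2 ^ (j + r) :=
      lt_of_lt_of_le hn (Nat.pow_le_pow_right (by norm_num) (by omega))
    simp [Nat.testBit_lt_two_pow this, hr]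

/-- If bit `i` of `x` is zero then `x % 2^(i+1) < 2^i`. -/
lemma mod_lt_of_testBit_false {x i : ℕ} (h : x.testBit i = false) : x % 2 ^ (i + 1) < 2 ^ i := by
  set a := x % 2 ^ (i + 1) with ha
  have h1 : a < 2 ^ (i + 1) := Nat.mod_lt _ (Nat.pow_pos (by norm_num))
  have h2 : a.testBit i = false := by
    rw [ha, Nat.testBit_mod_two_pow]
    simp [h]
  by_contra hc
  push_neg at hc
  have hd : a / 2 ^ i = 1 := by
    have hlt : a / 2 ^ i < 2 := by
      rw [Nat.div_lt_iff_lt_mul (Nat.pow_pos (by norm_num))]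
      have : (2:ℕ) ^ (i + 1) = 2 ^ i * 2 := by ring
      omega
    have : 1 ≤ a / 2 ^ i := Nat.one_le_div_iff (Nat.pow_pos (by norm_num)) |>.mpr hc
    omega
  rw [Nat.testBit_eq_decide_div_mod_eq, hd] at h2
  simp at h2

/-- For a pair `(ℓ, k)` in `S`, the index
`j = max { r : 0 ≤ r ≤ m−1 and C(ℓ, 2^r) ≡ 0 (mod 2) }`. -/
noncomputable def paperJ (m ℓ : ℕ) : ℕ :=
  sSup {r : ℕ | r ≤ m - 1 ∧ Even (Nat.choose ℓ (2 ^ r))}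

/-- For a pair `(ℓ, k)` in `S`, the index
`i = min { r : j ≤ r ≤ m−1 and C(k, 2^r) ≡ 0 (mod 2) }`. -/
noncomputable def paperI (m ℓ k : ℕ) : ℕ :=
  sInf {r : ℕ | paperJ m ℓ ≤ r ∧ r ≤ m - 1 ∧ Even (Nat.choose k (2 ^ r))}

/-- Well-definedness of the map `φ` of Lemma 6.18: for `(ℓ,k)` with `ℓ` even,
`0 ≤ ℓ, k ≤ 2^m − 1` and `k ≤ ℓ`:
(a) the set defining `j` is nonempty;
(b) the set defining `i` is nonempty;
(c) `2^m − 2^{i+1} ≤ ℓ` and `k + 2^i ≤ 2^m − 1`. -/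
theorem stmt_1 (m ℓ k : ℕ) (hm : 1 ≤ m) (hle : Even ℓ)
    (hl : ℓ ≤ 2 ^ m - 1) (hk : k ≤ 2 ^ m - 1) (hkl : k ≤ ℓ) :
    {r : ℕ | r ≤ m - 1 ∧ Even (Nat.choose ℓ (2 ^ r))}.Nonempty ∧
    {r : ℕ | paperJ m ℓ ≤ r ∧ r ≤ m - 1 ∧ Even (Nat.choose k (2 ^ r))}.Nonempty ∧
    2 ^ m - 2 ^ (paperI m ℓ k + 1) ≤ ℓ ∧
    k + 2 ^ paperI m ℓ k ≤ 2 ^ m - 1 := by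
  have h2m : 1 ≤ 2 ^ m := Nat.one_le_two_pow
  have hlm : ℓ < 2 ^ m := by omega
  have hkm : k < 2 ^ m := by omega
  -- the set defining j
  have hAne : {r : ℕ | r ≤ m - 1 ∧ Even (Nat.choose ℓ (2 ^ r))}.Nonempty := by
    refine ⟨0, Nat.zero_le _, ?_⟩
    simpa using hle
  have hAbdd : BddAbove {r : ℕ | r ≤ m - 1 ∧ Even (Nat.choose ℓ (2 ^ r))} :=
    ⟨m - 1, fun r hr => hr.1⟩
  have hjmem : paperJ m ℓ ∈ {r : ℕ | r ≤ m - 1 ∧ Even (Nat.choose ℓ (2 ^ r))} :=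
    Nat.sSup_mem hAne hAbdd
  set j := paperJ m ℓ with hjdef
  obtain ⟨hj1, hj2⟩ := hjmem
  rw [even_choose_two_pow_iff] at hj2
  have hjmax : ∀ r, j < r → r ≤ m - 1 → ℓ.testBit r = true := by
    intro r hr1 hr2
    by_contra hc
    have hf : ℓ.testBit r = false := by
      cases hb : ℓ.testBit r
      · rfl
      · exact absurd hb hc
    have : r ∈ {r : ℕ | r ≤ m - 1 ∧ Even (Nat.choose ℓ (2 ^ r))} :=
      ⟨hr2, (even_choose_two_pow_iff r ℓ).mpr hf⟩
    have hrj : r ≤ j := le_csSup hAbdd this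
    omega
  -- ℓ ≥ 2^m - 2^(j+1)
  have hjm : j + 1 + (m - 1 - j) = m := by omega
  have hdivl : ℓ / 2 ^ (j + 1) = 2 ^ (m - 1 - j) - 1 := by
    apply div_eq_ones
    · rw [hjm]; exact hlm
    · intro r hr
      exact hjmax (j + 1 + r) (by omega) (by omega)
  have hlge : 2 ^ m - 2 ^ (j + 1) ≤ ℓ := by
    have h1 : 2 ^ (j + 1) * (ℓ / 2 ^ (j + 1)) ≤ ℓ := Nat.mul_div_le ℓ _
    rw [hdivl, Nat.mul_sub, mul_one, ← pow_add, hjm] at h1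
    exact h1
  -- the set defining i
  have hBne : {r : ℕ | j ≤ r ∧ r ≤ m - 1 ∧ Even (Nat.choose k (2 ^ r))}.Nonempty := by
    by_contra hB
    rw [Set.not_nonempty_iff_eq_empty] at hB
    have hall : ∀ r, r < m - j → k.testBit (j + r) = true := by
      intro r hr
      cases hb : k.testBit (j + r)
      · exfalso
        have : (j + r) ∈ {r : ℕ | j ≤ r ∧ r ≤ m - 1 ∧ Even (Nat.choose k (2 ^ r))} :=
          ⟨by omega, by omega, (even_choose_two_pow_iff _ k).mpr hb⟩
        rw [hB] at this
        exact this
      · rfl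
    have hjm' : j + (m - j) = m := by omega
    have hdivk : k / 2 ^ j = 2 ^ (m - j) - 1 := by
      apply div_eq_ones
      · rw [hjm']; exact hkm
      · exact hall
    have hkge : 2 ^ m - 2 ^ j ≤ k := by
      have h1 : 2 ^ j * (k / 2 ^ j) ≤ k := Nat.mul_div_le k _
      rw [hdivk, Nat.mul_sub, mul_one, ← pow_add, hjm'] at h1
      exact h1
    -- ℓ < 2^m - 2^j
    have hmod : ℓ % 2 ^ (j + 1) < 2 ^ j := mod_lt_of_testBit_false hj2
    have hsplit : 2 ^ (j + 1) * (ℓ / 2 ^ (j + 1)) + ℓ % 2 ^ (j + 1) = ℓ :=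
      Nat.div_add_mod ℓ _
    have he : 2 ^ (j + 1) * (2 ^ (m - 1 - j) - 1) = 2 ^ m - 2 ^ (j + 1) := by
      rw [Nat.mul_sub, mul_one, ← pow_add, hjm]
    have he2 : 2 ^ (j + 1) = 2 * 2 ^ j := by ring
    have hjle : 2 ^ (j + 1) ≤ 2 ^ m := Nat.pow_le_pow_right (by norm_num) (by omega)
    rw [hdivl, he] at hsplit
    omega
  refine ⟨hAne, hBne, ?_, ?_⟩
  · have himem : paperI m ℓ k ∈ {r : ℕ | j ≤ r ∧ r ≤ m - 1 ∧ Even (Nat.choose k (2 ^ r))} :=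
      Nat.sInf_mem hBne
    set i := paperI m ℓ k with hidef
    obtain ⟨hij, hi1, _⟩ := himem
    calc 2 ^ m - 2 ^ (i + 1) ≤ 2 ^ m - 2 ^ (j + 1) :=
          Nat.sub_le_sub_left (Nat.pow_le_pow_right (by norm_num) (by omega)) _
      _ ≤ ℓ := hlge
  · have himem : paperI m ℓ k ∈ {r : ℕ | j ≤ r ∧ r ≤ m - 1 ∧ Even (Nat.choose k (2 ^ r))} :=
      Nat.sInf_mem hBne
    set i := paperI m ℓ k with hidef
    obtain ⟨hij, hi1, hi2⟩ := himem
    rw [even_choose_two_pow_iff] at hi2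
    have hmod : k % 2 ^ (i + 1) < 2 ^ i := mod_lt_of_testBit_false hi2
    have hsplit : 2 ^ (i + 1) * (k / 2 ^ (i + 1)) + k % 2 ^ (i + 1) = k :=
      Nat.div_add_mod k _
    have him : i + 1 + (m - 1 - i) = m := by omega
    have hdiv : k / 2 ^ (i + 1) < 2 ^ (m - 1 - i) := by
      rw [Nat.div_lt_iff_lt_mul (Nat.pow_pos (by norm_num)), ← pow_add]
      rw [show m - 1 - i + (i + 1) = m by omega]
      exact hkm
    -- c = 2^(i+1) * (k / 2^(i+1))
    have hc : 2 ^ (i + 1) * (k / 2 ^ (i + 1)) + 2 ^ (i + 1) ≤ 2 ^ m := by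
      have := Nat.mul_le_mul_left (2 ^ (i + 1)) (Nat.succ_le_of_lt hdiv)
      rw [Nat.mul_succ, ← pow_add, him] at this
      exact this
    have he2 : 2 ^ (i + 1) = 2 * 2 ^ i := by ring
    omega
end

section
/- Fix an integer m ≥ 1 and let ℓ, k be integers with ℓ even, 0 ≤ ℓ, k ≤ 2^m − 1 and ℓ < k. Then there exist UNIQUE non-negative integers i, κ, n such that 2^i ≤ κ < 2^{i+1}, κ − 2^i ≤ ℓ < κ, and k = κ + 2^{i+1}·n. -/
/-- The parametrization used in Theorem 6.20(2): for `ℓ` even with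
`0 ≤ ℓ, k ≤ 2^m − 1` and `ℓ < k`, there exist unique non-negative integers
`i, κ, n` with `2^i ≤ κ < 2^{i+1}`, `κ − 2^i ≤ ℓ < κ`, and `k = κ + 2^{i+1}·n`. -/
theorem stmt_3 (m ℓ k : ℕ) (hm : 1 ≤ m) (hle : Even ℓ)
    (hl : ℓ ≤ 2 ^ m - 1) (hk : k ≤ 2 ^ m - 1) (hlk : ℓ < k) :
    ∃! t : ℕ × ℕ × ℕ,
      2 ^ t.1 ≤ t.2.1 ∧ t.2.1 < 2 ^ (t.1 + 1) ∧
      t.2.1 - 2 ^ t.1 ≤ ℓ ∧ ℓ < t.2.1 ∧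
      k = t.2.1 + 2 ^ (t.1 + 1) * t.2.2 := by
  have hP : ∃ i, ℓ < k % 2 ^ (i + 1) := by
    refine ⟨k, ?_⟩
    have hk2 : k < 2 ^ (k + 1) :=
      lt_of_lt_of_le (Nat.lt_two_pow_self (n := k)) (Nat.pow_le_pow_right (by norm_num) (Nat.le_succ k))
    rw [Nat.mod_eq_of_lt hk2]
    exact hlk
  set i := Nat.find hP with hidef
  have hi : ℓ < k % 2 ^ (i + 1) := Nat.find_spec hP
  have hlow : k % 2 ^ i ≤ ℓ := by
    rcases Nat.eq_zero_or_pos i with h0 | hpos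
    · simp [h0, Nat.mod_one]
    · obtain ⟨j, hj⟩ := Nat.exists_eq_add_of_lt hpos
      have hmin := Nat.find_min hP (m := j) (by omega)
      have : k % 2 ^ (j + 1) ≤ ℓ := Nat.le_of_not_lt hmin
      rw [show i = j + 1 by omega]
      exact this
  set κ := k % 2 ^ (i + 1) with hκdef
  have hκmod : κ % 2 ^ i = k % 2 ^ i :=
    Nat.mod_mod_of_dvd k (pow_dvd_pow 2 (Nat.le_succ i))
  have hκlt : κ < 2 ^ (i + 1) := Nat.mod_lt _ (Nat.pow_pos (by norm_num))
  have h2 : (2:ℕ) ^ (i + 1) = 2 ^ i + 2 ^ i := by rw [pow_succ]; ring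
  have hκge : 2 ^ i ≤ κ := by
    by_contra h
    have : κ % 2 ^ i = κ := Nat.mod_eq_of_lt (by omega)
    omega
  have hκsub : κ - 2 ^ i ≤ ℓ := by
    have : κ % 2 ^ i = κ - 2 ^ i := by
      rw [Nat.mod_eq_sub_mod hκge, Nat.mod_eq_of_lt (by omega)]
    omega
  refine ⟨⟨i, κ, k / 2 ^ (i + 1)⟩, ⟨hκge, hκlt, hκsub, hi, (Nat.mod_add_div k _).symm⟩, ?_⟩
  rintro ⟨j, κ', n'⟩ ⟨hg, hlt, hsub, hℓ, hkeq⟩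
  simp only at hg hlt hsub hℓ hkeq
  have hκ' : κ' = k % 2 ^ (j + 1) := by
    rw [hkeq, Nat.add_mul_mod_self_left, Nat.mod_eq_of_lt hlt]
  have hij : i ≤ j := Nat.find_min' hP (by rw [← hκ']; exact hℓ)
  have hji : j ≤ i := by
    by_contra h
    have hij1 : i + 1 ≤ j := by omega
    have hlow' : k % 2 ^ j ≤ ℓ := by
      have h2' : (2:ℕ) ^ (j + 1) = 2 ^ j + 2 ^ j := by rw [pow_succ]; ring
      have hge' : 2 ^ j ≤ κ' := hg
      have hmm : κ' % 2 ^ j = k % 2 ^ j := by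
        rw [hκ']; exact Nat.mod_mod_of_dvd k (pow_dvd_pow 2 (Nat.le_succ j))
      have : κ' % 2 ^ j = κ' - 2 ^ j := by
        rw [Nat.mod_eq_sub_mod hge', Nat.mod_eq_of_lt (by omega)]
      omega
    have : k % 2 ^ (i + 1) ≤ k % 2 ^ j := by
      conv_lhs => rw [← Nat.mod_mod_of_dvd k (pow_dvd_pow 2 hij1)]
      exact Nat.mod_le _ _
    omega
  have hji' : j = i := le_antisymm hji hij
  subst hji'
  have hκκ : κ' = κ := by rw [hκ']
  have hn : n' = k / 2 ^ (i + 1) := by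
    have hpos : 0 < 2 ^ (i + 1) := Nat.pow_pos (by norm_num)
    have := Nat.mod_add_div k (2 ^ (i + 1))
    rw [← hκdef] at this
    have h2' : 2 ^ (i + 1) * n' = 2 ^ (i + 1) * (k / 2 ^ (i + 1)) := by omega
    exact Nat.eq_of_mul_eq_mul_left hpos h2'
  simp [hκκ, hn]
end
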